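/- arXiv:1411.1028 — 4 statements merged into one kernel-verified Lean document; each statement's English description precedes it below -/
import Mathlib

section
/- Fix n ≥ 2, indices 1 ≤ i < j ≤ n, a real number q, and points p₁, …, pₙ in a real inner product space E. Let B = {i, i+1, …, j−1} and define p̂_m = p_m + (q−1)·(p_i − p_j) for m ∈ B and p̂_m = p_m for m ∉ B. Writing a_{kl} = ‖p_k − p_l‖² (with the convention a_{mm} = 0 and a_{kl} = a_{lk}), the new edge norms are given by the following formulas, which depend only on the old edge norms: if k and l are both in B or both not in B then ‖p̂_k − p̂_l‖² = a_{kl}; and if k ∈ B and l ∉ B then ‖p̂_k − p̂_l‖² = a_{kl} + (q−1)²·a_{ij} + (q−1)·(a_{kj} + a_{il}) + (1−q)·(a_{ik} + a_{jl}). In particular ‖p̂_i − p̂_j‖² = q²·a_{ij}, so this q-rescaling multiplies the edge norm vector by an explicit matrix whose entries are integer polynomials in q of degree at most 2, independent of the points p. -/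
private lemma cross_ident {E : Type*} [NormedAddCommGroup E] [InnerProductSpace ℝ E]
    (a b c d : E) :
    2 * (inner ℝ (a - b) (c - d) : ℝ) =
      ‖a - d‖ ^ 2 + ‖c - b‖ ^ 2 - ‖c - a‖ ^ 2 - ‖d - b‖ ^ 2 := by
  simp only [@norm_sub_sq_real, inner_sub_left, inner_sub_right]
  rw [real_inner_comm c a, real_inner_comm c b, real_inner_comm d b]
  ring

private lemma mixed_norm {E : Type*} [NormedAddCommGroup E] [InnerProductSpace ℝ E]
    (q : ℝ) (pk pl pi pj : E) :
    ‖(pk + (q - 1) • (pi - pj)) - pl‖ ^ 2 =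
      ‖pk - pl‖ ^ 2 + (q - 1) ^ 2 * ‖pi - pj‖ ^ 2
        + (q - 1) * (‖pk - pj‖ ^ 2 + ‖pi - pl‖ ^ 2)
        + (1 - q) * (‖pi - pk‖ ^ 2 + ‖pj - pl‖ ^ 2) := by
  have h : (pk + (q - 1) • (pi - pj)) - pl = (pk - pl) + (q - 1) • (pi - pj) := by abel
  rw [h, norm_add_sq_real, real_inner_smul_right, norm_smul]
  have hc := cross_ident pk pl pi pj
  have : (inner ℝ (pk - pl) (pi - pj) : ℝ) =
      (‖pk - pj‖ ^ 2 + ‖pi - pl‖ ^ 2 - ‖pi - pk‖ ^ 2 - ‖pj - pl‖ ^ 2) / 2 := by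
    linarith
  rw [this]
  have : ‖q - 1‖ = |q - 1| := rfl
  rw [this, mul_pow, sq_abs]
  ring

/-- The `q`-rescaling of the edge between vertices `i` and `j`: the vertices indexed by
`B = {i, i+1, …, j−1}` are translated by `(q−1)·(p_i − p_j)` and all others are fixed. -/
noncomputable def qRescale {E : Type*} [NormedAddCommGroup E] [InnerProductSpace ℝ E]
    {n : ℕ} (i j : Fin n) (q : ℝ) (p : Fin n → E) : Fin n → E :=
  fun m => if i ≤ m ∧ m < j then p m + (q - 1) • (p i - p j) else p m

/-- **Quadratic matrices / rescaling a general edge.**  For `i < j` and the `q`-rescaling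
`p̂` of the points `p` along the edge between vertices `i` and `j` (fixing the
subconfigurations indexed by `B = {i,…,j−1}` and its complement rigidly), the new edge
norms are given by explicit formulas in the old edge norms: edges with both endpoints in
`B`, or both outside `B`, are unchanged, while for `k ∈ B` and `l ∉ B` the new norm is
`a_{kl} + (q−1)²·a_{ij} + (q−1)·(a_{kj}+a_{il}) + (1−q)·(a_{ik}+a_{jl})`.
In particular, `‖p̂_i − p̂_j‖² = q²·a_{ij}`. -/
theorem qRescale_edge_norms {E : Type*} [NormedAddCommGroup E] [InnerProductSpace ℝ E]
    (n : ℕ) (hn : 2 ≤ n) (i j : Fin n) (hij : i < j) (q : ℝ) (p : Fin n → E) :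
    (∀ k l : Fin n, ((i ≤ k ∧ k < j) ↔ (i ≤ l ∧ l < j)) →
        ‖qRescale i j q p k - qRescale i j q p l‖ ^ 2 = ‖p k - p l‖ ^ 2) ∧
    (∀ k l : Fin n, (i ≤ k ∧ k < j) → ¬(i ≤ l ∧ l < j) →
        ‖qRescale i j q p k - qRescale i j q p l‖ ^ 2 =
          ‖p k - p l‖ ^ 2 + (q - 1) ^ 2 * ‖p i - p j‖ ^ 2
            + (q - 1) * (‖p k - p j‖ ^ 2 + ‖p i - p l‖ ^ 2)
            + (1 - q) * (‖p i - p k‖ ^ 2 + ‖p j - p l‖ ^ 2)) ∧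
    ‖qRescale i j q p i - qRescale i j q p j‖ ^ 2 = q ^ 2 * ‖p i - p j‖ ^ 2 := by
  refine ⟨?_, ?_, ?_⟩
  · intro k l h
    simp only [qRescale]
    by_cases hk : i ≤ k ∧ k < j
    · rw [if_pos hk, if_pos (h.mp hk)]
      congr 1
      abel
    · rw [if_neg hk, if_neg (fun hl => hk (h.mpr hl))]
  · intro k l hk hl
    simp only [qRescale, if_pos hk, if_neg hl]
    exact mixed_norm q (p k) (p l) (p i) (p j)
  · have hi : i ≤ i ∧ i < j := ⟨le_refl i, hij⟩
    have hj : ¬(i ≤ j ∧ j < j) := fun h => lt_irrefl j h.2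
    simp only [qRescale, if_pos hi, if_neg hj]
    have h : (p i + (q - 1) • (p i - p j)) - p j = q • (p i - p j) := by
      rw [sub_smul, one_smul]; abel
    rw [h, norm_smul]
    have : ‖q‖ = |q| := rfl
    rw [this, mul_pow, sq_abs]
end

section
/- Fix n ≥ 2, an index 1 ≤ i < n with j = i+1, and a real number q. Let 𝓔ₙ be the set of pairs (k,l) with 1 ≤ k < l ≤ n, and define three real matrices with rows and columns indexed by 𝓔ₙ, specifying each row as a linear combination of the standard basis vectors e_{k'l'}: (i) S_i: row (i,j) is q²·e_{ij}; row (k,l) is e_{kl} if {k,l} ∩ {i,j} = ∅; row (i,l) is e_{jl} if l > j; row (k,i) is e_{kj} if k < i; row (k,j) is (q²−q)·e_{ij} + q·e_{ki} + (1−q)·e_{kj} if k < i; row (j,l) is (q²−q)·e_{ij} + q·e_{il} + (1−q)·e_{jl} if l > j. (ii) P_i: row (k,l) is e_{τ(k)τ(l)}, where τ is the transposition swapping i and j and the indices τ(k), τ(l) are reordered increasingly. (iii) R_i: row (i,j) is q²·e_{ij}; row (k,l) is e_{kl} whenever {k,l} ∩ {i,j} = ∅ or {k,l} contains j but not i; row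 (k,l) is (q²−q)·e_{ij} + q·e_{im} + (1−q)·e_{jm} whenever {k,l} = {i,m} with m ∉ {i,j}. Then S_i = P_i · R_i, where the product is matrix multiplication with the convention that row (k,l) of a product M·N is the result of applying N to row (k,l) of M. -/
/-- The index set `𝓔ₙ` of edges: pairs `(k,l)` with `k < l` in `Fin n`. -/
abbrev EdgeIdx (n : ℕ) : Type := {p : Fin n × Fin n // p.1 < p.2}

/-- The standard basis vector `e_{ab}` of `ℝ^{𝓔ₙ}`, viewed symmetrically in `a, b`
(with the convention `e_{mm} = 0`). -/
def eVec {n : ℕ} (a b : Fin n) : EdgeIdx n → ℝ :=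
  fun c => if (c.1.1 = a ∧ c.1.2 = b) ∨ (c.1.1 = b ∧ c.1.2 = a) then 1 else 0

/-- The matrix `S_i` of the standard braid generator `s_{i,i+1}` (here `j = i+1`) in the
simplicial representation (the LKB representation at `t = 1`), given row-wise. -/
def simpGenMatrix (n : ℕ) (i j : Fin n) (q : ℝ) : Matrix (EdgeIdx n) (EdgeIdx n) ℝ :=
  fun r c =>
    if r.1.1 = i ∧ r.1.2 = j then q ^ 2 * eVec i j c
    else if r.1.1 = i then eVec j r.1.2 c
    else if r.1.2 = i then eVec r.1.1 j c
    else if r.1.2 = j then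
      (q ^ 2 - q) * eVec i j c + q * eVec r.1.1 i c + (1 - q) * eVec r.1.1 j c
    else if r.1.1 = j then
      (q ^ 2 - q) * eVec i j c + q * eVec i r.1.2 c + (1 - q) * eVec j r.1.2 c
    else eVec r.1.1 r.1.2 c

/-- The permutation matrix `P_i` describing the relabeling of edges induced by the
transposition swapping `i` and `j`. -/
def permMatrix (n : ℕ) (i j : Fin n) : Matrix (EdgeIdx n) (EdgeIdx n) ℝ :=
  fun r c => eVec (Equiv.swap i j r.1.1) (Equiv.swap i j r.1.2) c

/-- The edge rescaling matrix `R_i = R^{i,j}_{rc(i,j)}` (with `j = i+1`), rescaling the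
edge `e_{ij}` by `q` while fixing the edges of the right complement. -/
def rcRescaleMatrix (n : ℕ) (i j : Fin n) (q : ℝ) : Matrix (EdgeIdx n) (EdgeIdx n) ℝ :=
  fun r c =>
    if r.1.1 = i ∧ r.1.2 = j then q ^ 2 * eVec i j c
    else if r.1.1 = i then
      (q ^ 2 - q) * eVec i j c + q * eVec i r.1.2 c + (1 - q) * eVec j r.1.2 c
    else if r.1.2 = i then
      (q ^ 2 - q) * eVec i j c + q * eVec i r.1.1 c + (1 - q) * eVec j r.1.1 c
    else eVec r.1.1 r.1.2 c

/-- The edge rescaling matrix `R′_i = R^{i,j}_{lc(i,j)}` (with `j = i+1`), rescaling the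
edge `e_{ij}` by `q` while fixing the edges of the left complement. -/
def lcRescaleMatrix (n : ℕ) (i j : Fin n) (q : ℝ) : Matrix (EdgeIdx n) (EdgeIdx n) ℝ :=
  fun r c =>
    if r.1.1 = i ∧ r.1.2 = j then q ^ 2 * eVec i j c
    else if r.1.1 = j then
      (q ^ 2 - q) * eVec i j c + q * eVec j r.1.2 c + (1 - q) * eVec i r.1.2 c
    else if r.1.2 = j then
      (q ^ 2 - q) * eVec i j c + q * eVec j r.1.1 c + (1 - q) * eVec i r.1.1 c
    else eVec r.1.1 r.1.2 c


def mkEdge {n : ℕ} (a b : Fin n) (h : a ≠ b) : EdgeIdx n :=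
  if hab : a < b then ⟨(a, b), hab⟩ else ⟨(b, a), h.lt_or_gt.resolve_left hab⟩

lemma eVec_comm {n : ℕ} (a b : Fin n) (c : EdgeIdx n) : eVec a b c = eVec b a c := by
  simp [eVec, or_comm]

lemma eVec_eq_ite {n : ℕ} (a b : Fin n) (h : a ≠ b) (c : EdgeIdx n) :
    eVec a b c = if c = mkEdge a b h then 1 else 0 := by
  have hc := c.2
  unfold eVec mkEdge
  rcases h.lt_or_gt with hab | hba
  · rw [dif_pos hab]
    congr 1
    simp only [eq_iff_iff]
    constructor
    · rintro (⟨ha, hb⟩ | ⟨hb, ha⟩)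
      · exact Subtype.ext (Prod.ext ha hb)
      · exact absurd hc (by rw [hb, ha]; exact not_lt.2 hab.le)
    · rintro rfl; exact Or.inl ⟨rfl, rfl⟩
  · rw [dif_neg (not_lt.2 hba.le)]
    congr 1
    simp only [eq_iff_iff]
    constructor
    · rintro (⟨ha, hb⟩ | ⟨hb, ha⟩)
      · exact absurd hc (by rw [ha, hb]; exact not_lt.2 hba.le)
      · exact Subtype.ext (Prod.ext hb ha)
    · rintro rfl; exact Or.inr ⟨rfl, rfl⟩

lemma perm_mul_apply {n : ℕ} (i j : Fin n) (M : Matrix (EdgeIdx n) (EdgeIdx n) ℝ)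
    (r : EdgeIdx n) (c : EdgeIdx n) :
    (permMatrix n i j * M) r c =
      M (mkEdge (Equiv.swap i j r.1.1) (Equiv.swap i j r.1.2)
          (fun h => (ne_of_lt r.2) ((Equiv.swap i j).injective h)) ) c := by
  rw [Matrix.mul_apply]
  simp only [permMatrix, eVec_eq_ite _ _ (fun h => (ne_of_lt r.2) ((Equiv.swap i j).injective h)),
    ite_mul, one_mul, zero_mul]
  rw [Finset.sum_ite_eq' Finset.univ]
  simp

theorem simpGen_eq_perm_mul_rcRescale' (n : ℕ) (hn : 2 ≤ n) (i j : Fin n)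
    (hij : (i : ℕ) + 1 = (j : ℕ)) (q : ℝ) :
    simpGenMatrix n i j q = permMatrix n i j * rcRescaleMatrix n i j q := by
  have hijlt : i < j := by rw [Fin.lt_def]; omega
  have hijne : i ≠ j := ne_of_lt hijlt
  ext r c
  rw [perm_mul_apply]
  obtain ⟨⟨k, l⟩, hkl⟩ := r
  have hkl' : (k : ℕ) < (l : ℕ) := hkl
  by_cases hki : k = i
  · have hki' : (k : ℕ) = (i : ℕ) := by rw [hki]
    by_cases hlj : l = j
    · -- (k,l) = (i,j)
      simp [simpGenMatrix, rcRescaleMatrix, mkEdge, hki, hlj,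
        Equiv.swap_apply_left, Equiv.swap_apply_right, asymm hijlt]
    · -- k = i, l > j
      have hlj' : (l : ℕ) ≠ (j : ℕ) := fun h => hlj (Fin.ext h)
      have hjl : j < l := by rw [Fin.lt_def]; omega
      have hli : l ≠ i := by rw [Fin.ne_iff_vne]; omega
      simp [simpGenMatrix, rcRescaleMatrix, mkEdge, hki, hlj, hjl,
        Equiv.swap_apply_left, Equiv.swap_apply_of_ne_of_ne hli hlj,
        hijne.symm, ne_of_gt hjl, hli]
  · have hki' : (k : ℕ) ≠ (i : ℕ) := fun h => hki (Fin.ext h)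
    by_cases hli : l = i
    · -- l = i, k < i
      have hli' : (l : ℕ) = (i : ℕ) := by rw [hli]
      have hkj : k ≠ j := by rw [Fin.ne_iff_vne]; omega
      have hkjlt : k < j := by rw [Fin.lt_def]; omega
      simp [simpGenMatrix, rcRescaleMatrix, mkEdge, hki, hli, hkj, hkjlt,
        Equiv.swap_apply_left, Equiv.swap_apply_of_ne_of_ne hki hkj,
        hijne, hijne.symm, ne_of_lt hkjlt]
    · have hli' : (l : ℕ) ≠ (i : ℕ) := fun h => hli (Fin.ext h)
      by_cases hlj : l = j
      · -- l = j, k < i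
        have hlj' : (l : ℕ) = (j : ℕ) := by rw [hlj]
        have hkilt : k < i := by rw [Fin.lt_def]; omega
        have hkj : k ≠ j := by rw [Fin.ne_iff_vne]; omega
        simp only [simpGenMatrix, rcRescaleMatrix, mkEdge, hlj,
          Equiv.swap_apply_right, Equiv.swap_apply_of_ne_of_ne hki hkj]
        rw [dif_pos hkilt]
        simp only [hki, hli, if_false, and_false, false_and, if_neg hki,
          if_neg (show ¬(k = i ∧ (i : Fin n) = j) from fun h => hki h.1),
          if_neg (ne_of_lt hkilt).symm, if_pos rfl, if_pos hlj, if_true]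
        rw [if_neg hijne.symm, eVec_comm k i, eVec_comm k j]
      · have hlj' : (l : ℕ) ≠ (j : ℕ) := fun h => hlj (Fin.ext h)
        by_cases hkj : k = j
        · -- k = j, l > j
          have hkj' : (k : ℕ) = (j : ℕ) := by rw [hkj]
          have hil : i < l := by rw [Fin.lt_def]; omega
          simp [simpGenMatrix, rcRescaleMatrix, mkEdge, hki, hkj, hli, hlj, hil,
            Equiv.swap_apply_right, Equiv.swap_apply_of_ne_of_ne hli hlj,
            hijne, hijne.symm, ne_of_gt hil]
        · -- disjoint
          simp [simpGenMatrix, rcRescaleMatrix, mkEdge, hki, hkj, hli, hlj, hkl,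
            Equiv.swap_apply_of_ne_of_ne hki hkj,
            Equiv.swap_apply_of_ne_of_ne hli hlj]


/-- **`S_i = P_i · R_i`.** For `j = i+1`, the matrix of the standard braid generator
`s_{i,i+1}` in the simplicial representation factors as the edge-relabeling permutation
matrix `P_i` times the edge rescaling matrix `R_i = R^{i,i+1}_{rc(i,i+1)}`. -/
theorem simpGen_eq_perm_mul_rcRescale (n : ℕ) (hn : 2 ≤ n) (i j : Fin n)
    (hij : (i : ℕ) + 1 = (j : ℕ)) (q : ℝ) :
    simpGenMatrix n i j q = permMatrix n i j * rcRescaleMatrix n i j q := by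
  exact simpGen_eq_perm_mul_rcRescale' n hn i j hij q
end

section
/- Fix n ≥ 2, an index 1 ≤ i < n with j = i+1, and a real number q. Let 𝓔ₙ be the set of pairs (k,l) with 1 ≤ k < l ≤ n, and define three real matrices with rows and columns indexed by 𝓔ₙ, specifying each row as a linear combination of the standard basis vectors e_{k'l'}: (i) S_i: row (i,j) is q²·e_{ij}; row (k,l) is e_{kl} if {k,l} ∩ {i,j} = ∅; row (i,l) is e_{jl} if l > j; row (k,i) is e_{kj} if k < i; row (k,j) is (q²−q)·e_{ij} + q·e_{ki} + (1−q)·e_{kj} if k < i; row (j,l) is (q²−q)·e_{ij} + q·e_{il} + (1−q)·e_{jl} if l > j. (ii) P_i: row (k,l) is e_{τ(k)τ(l)}, where τ is the transposition swapping i and j and the indices τ(k), τ(l) are reordered increasingly. (iii) R′_i: row (i,j) is q²·e_{ij}; row (k,l) is e_{kl} whenever {k,l} ∩ {i,j} = ∅ or {k,l} contains i but not j; row (k,l) is (q²−q)·e_{ij} + q·e_{jm} + (1−q)·e_{im} whenever {k,l} = {j,m} with m ∉ {i,j}. Then S_i = R′_i · P_i, where the product is matrix multiplication with the convention that row (k,l)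 of a product M·N is the result of applying N to row (k,l) of M. -/
lemma eVec_symm {n : ℕ} (a b : Fin n) : eVec a b = eVec b a := by
  funext c; simp [eVec, or_comm]

lemma eVec_self {n : ℕ} (a : Fin n) : eVec a a = fun _ => (0 : ℝ) := by
  funext c
  simp only [eVec]
  rw [if_neg]
  rintro (⟨h1, h2⟩ | ⟨h1, h2⟩) <;>
    exact absurd c.2 (by rw [h1, h2]; exact lt_irrefl a)

lemma sum_eVec_mul {n : ℕ} (a b : Fin n) (g : EdgeIdx n → ℝ) (hab : a < b) :
    ∑ m : EdgeIdx n, eVec a b m * g m = g ⟨(a, b), hab⟩ := by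
  rw [Finset.sum_eq_single (⟨(a, b), hab⟩ : EdgeIdx n)]
  · simp [eVec]
  · intro m _ hm
    have hz : eVec a b m = 0 := by
      simp only [eVec]
      rw [if_neg]
      rintro (⟨h1, h2⟩ | ⟨h1, h2⟩)
      · exact hm (Subtype.ext (Prod.ext h1 h2))
      · exact absurd m.2 (by rw [h1, h2]; exact not_lt.2 hab.le)
    rw [hz, zero_mul]
  · intro h; exact absurd (Finset.mem_univ _) h

lemma sum_eVec_perm {n : ℕ} (i j a b : Fin n) (c : EdgeIdx n) :
    ∑ m : EdgeIdx n, eVec a b m * permMatrix n i j m c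
      = eVec (Equiv.swap i j a) (Equiv.swap i j b) c := by
  rcases lt_trichotomy a b with h | h | h
  · rw [sum_eVec_mul a b _ h]; rfl
  · subst h
    rw [eVec_self]
    simp [eVec_self]
  · simp only [eVec_symm a b]
    rw [sum_eVec_mul b a _ h]
    show eVec (Equiv.swap i j b) (Equiv.swap i j a) c = _
    rw [eVec_symm]

/-- **`S_i = R′_i · P_i`.** For `j = i+1`, the matrix of the standard braid generator
`s_{i,i+1}` in the simplicial representation factors as the edge rescaling matrix
`R′_i = R^{i,i+1}_{lc(i,i+1)}` times the edge-relabeling permutation matrix `P_i`. -/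
theorem simpGen_eq_lcRescale_mul_perm (n : ℕ) (hn : 2 ≤ n) (i j : Fin n)
    (hij : (i : ℕ) + 1 = (j : ℕ)) (q : ℝ) :
    simpGenMatrix n i j q = lcRescaleMatrix n i j q * permMatrix n i j := by
  have hlt : i < j := by
    rw [Fin.lt_def]; omega
  have hne : i ≠ j := hlt.ne
  funext r c
  rw [Matrix.mul_apply]
  obtain ⟨⟨k, l⟩, hkl⟩ := r
  simp only [simpGenMatrix, lcRescaleMatrix]
  by_cases hA : k = i ∧ l = j
  · simp only [if_pos hA, mul_assoc]
    rw [← Finset.mul_sum, sum_eVec_perm,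
      Equiv.swap_apply_left, Equiv.swap_apply_right, eVec_symm i j]
  · simp only [if_neg hA]
    by_cases hB : k = i
    · -- row (i, l), l ≠ j, l > i
      have hlj : l ≠ j := fun h => hA ⟨hB, h⟩
      have hli : l ≠ i := by subst hB; exact hkl.ne'
      have hkj : k ≠ j := hB ▸ hne
      simp only [if_pos hB, if_neg hkj, if_neg hlj]
      rw [sum_eVec_perm, hB,
        Equiv.swap_apply_left, Equiv.swap_apply_of_ne_of_ne hli hlj]
    · simp only [if_neg hB]
      by_cases hC : l = i
      · -- row (k, i), k < i
        have hki : k ≠ i := hB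
        have hkj : k ≠ j := by
          intro h; subst h; subst hC; exact absurd hkl (not_lt.2 hlt.le)
        have hlj : l ≠ j := hC ▸ hne
        simp only [if_pos hC, if_neg hkj, if_neg hlj]
        rw [sum_eVec_perm, hC,
          Equiv.swap_apply_left, Equiv.swap_apply_of_ne_of_ne hki hkj]
      · simp only [if_neg hC]
        by_cases hD : l = j
        · -- row (k, j), k ≠ i, k < j
          have hkj : k ≠ j := by subst hD; exact hkl.ne
          simp only [if_pos hD, if_neg hkj, add_mul, mul_assoc]
          rw [Finset.sum_add_distrib, Finset.sum_add_distrib,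
            ← Finset.mul_sum, ← Finset.mul_sum, ← Finset.mul_sum,
            sum_eVec_perm, sum_eVec_perm, sum_eVec_perm,
            Equiv.swap_apply_left, Equiv.swap_apply_right,
            Equiv.swap_apply_of_ne_of_ne hB hkj,
            eVec_symm j i, eVec_symm i k, eVec_symm j k]
        · simp only [if_neg hD]
          by_cases hE : k = j
          · -- row (j, l), l > j
            have hli : l ≠ i := by
              intro h; subst h; subst hE; exact absurd hkl (not_lt.2 hlt.le)
            have hlj : l ≠ j := by subst hE; exact hkl.ne'
            simp only [if_pos hE, add_mul, mul_assoc]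
            rw [Finset.sum_add_distrib, Finset.sum_add_distrib,
              ← Finset.mul_sum, ← Finset.mul_sum, ← Finset.mul_sum,
              sum_eVec_perm, sum_eVec_perm, sum_eVec_perm,
              Equiv.swap_apply_left, Equiv.swap_apply_right,
              Equiv.swap_apply_of_ne_of_ne hli hlj,
              eVec_symm j i]
          · simp only [if_neg hE]
            rw [sum_eVec_perm,
              Equiv.swap_apply_of_ne_of_ne hB hE,
              Equiv.swap_apply_of_ne_of_ne hC hD]
end

section
/- Fix n ≥ 2, an index 1 ≤ i < n with j = i+1, a real number q, and points p₁, …, pₙ in a real inner product space E. Define p′ by p′_m = p_m for m ∉ {i, j}, p′_i = p_j, and p′_j = q·p_i + (1−q)·p_j. Let v ∈ ℝ^{𝓔ₙ} be the edge norm vector of p (so v(k,l) = ‖p_k − p_l‖²) and v′ the edge norm vector of p′. Then v′ = S_i · v, i.e. for every (k,l) ∈ 𝓔ₙ, v′(k,l) = Σ_{(k',l')} S_i[(k,l),(k',l')]·v(k',l'), where S_i is the matrix of the standard braid generator in the simplicial representation: row (i,j) of S_i is q²·e_{ij}; row (k,l) is e_{kl} if {k,l} ∩ {i,j} = ∅;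 row (i,l) is e_{jl} if l > j; row (k,i) is e_{kj} if k < i; row (k,j) is (q²−q)·e_{ij} + q·e_{ki} + (1−q)·e_{kj} if k < i; row (j,l) is (q²−q)·e_{ij} + q·e_{il} + (1−q)·e_{jl} if l > j. -/
/-- The edge norm vector of a labeled family of points: `v(k,l) = ‖p_k − p_l‖²`. -/
noncomputable def edgeNormVec {E : Type*} [NormedAddCommGroup E] [InnerProductSpace ℝ E]
    {n : ℕ} (p : Fin n → E) : EdgeIdx n → ℝ :=
  fun c => ‖p c.1.1 - p c.1.2‖ ^ 2

lemma sum_eVec {n : ℕ} (a b : Fin n) (hab : a < b) (f : EdgeIdx n → ℝ) :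
    ∑ c, eVec a b c * f c = f ⟨(a, b), hab⟩ := by
  rw [Finset.sum_eq_single (⟨(a, b), hab⟩ : EdgeIdx n)]
  · simp [eVec]
  · intro c _ hc
    have h : ¬((c.1.1 = a ∧ c.1.2 = b) ∨ (c.1.1 = b ∧ c.1.2 = a)) := by
      rintro (⟨h1, h2⟩ | ⟨h1, h2⟩)
      · exact hc (Subtype.ext (Prod.ext h1 h2))
      · exact absurd (h1 ▸ h2 ▸ c.2) (lt_asymm hab)
    simp [eVec, h]
  · intro h; exact absurd (Finset.mem_univ _) h

lemma norm_combo {E : Type*} [NormedAddCommGroup E] [InnerProductSpace ℝ E]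
    (a b : E) (q : ℝ) :
    ‖q • a + (1 - q) • b‖ ^ 2 = (q ^ 2 - q) * ‖a - b‖ ^ 2 + q * ‖a‖ ^ 2 + (1 - q) * ‖b‖ ^ 2 := by
  simp only [← real_inner_self_eq_norm_sq, inner_add_add_self, inner_sub_sub_self,
    real_inner_smul_left, real_inner_smul_right, real_inner_comm a b]
  ring

/-- **The standard generator acts on edge norm vectors by `S_i`.** Let `j = i+1` and let
`p′` be obtained from `p` by rescaling the edge between vertices `i` and `j` by the
factor `q` and relabeling by the transposition `(i j)`: `p′_i = p_j`,
`p′_j = q·p_i + (1−q)·p_j`, `p′_m = p_m` otherwise. Then the edge norm vector of `p′`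
equals `S_i` applied to the edge norm vector of `p`. -/
theorem edgeNormVec_braid_generator {E : Type*} [NormedAddCommGroup E]
    [InnerProductSpace ℝ E] (n : ℕ) (hn : 2 ≤ n) (i j : Fin n)
    (hij : (i : ℕ) + 1 = (j : ℕ)) (q : ℝ) (p p' : Fin n → E)
    (hp' : p' = fun m => if m = i then p j else if m = j then q • p i + (1 - q) • p j
      else p m) :
    edgeNormVec p' = (simpGenMatrix n i j q).mulVec (edgeNormVec p) := by
  have hij' : i < j := by rw [Fin.lt_def]; omega
  have hne : i ≠ j := ne_of_lt hij'
  funext r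
  obtain ⟨⟨k, l⟩, hkl⟩ := r
  have hkl' : (k : ℕ) < (l : ℕ) := hkl
  have hL : edgeNormVec p' ⟨(k, l), hkl⟩ = ‖p' k - p' l‖ ^ 2 := rfl
  rw [hL]
  by_cases hki : k = i
  · subst hki
    by_cases hlj : l = j
    · subst hlj
      -- row (i,j)
      have h1 : p' k = p l := by rw [hp']; simp
      have h2 : p' l = q • p k + (1 - q) • p l := by rw [hp']; simp [hne.symm]
      have hrow : ∀ c, simpGenMatrix n k l q ⟨(k, l), hkl⟩ c = q ^ 2 * eVec k l c := by
        intro c; simp [simpGenMatrix]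
      simp only [Matrix.mulVec, dotProduct, hrow, mul_assoc]
      rw [← Finset.mul_sum, sum_eVec k l hkl]
      have h3 : p l - (q • p k + (1 - q) • p l) = q • (p l - p k) := by module
      rw [h1, h2, h3, norm_smul, mul_pow, norm_sub_rev]
      simp [edgeNormVec, sq_abs]
    · -- row (i,l), l > j
      have hjl : j < l := by rw [Fin.lt_def]; have := Fin.val_ne_of_ne hlj; omega
      have hlk : l ≠ k := ne_of_gt hkl
      have h1 : p' k = p j := by rw [hp']; simp
      have h2 : p' l = p l := by rw [hp']; simp [hlk, hlj]
      have hrow : ∀ c, simpGenMatrix n k j q ⟨(k, l), hkl⟩ c = eVec j l c := by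
        intro c; simp [simpGenMatrix, hlj]
      simp only [Matrix.mulVec, dotProduct, hrow]
      rw [sum_eVec j l hjl, h1, h2]
      rfl
  · by_cases hli : l = i
    · subst hli
      -- row (k,i), k < i
      have hkj : k < j := lt_trans hkl hij'
      have hkj' : k ≠ j := ne_of_lt hkj
      have h1 : p' k = p k := by rw [hp']; simp [hki, hkj']
      have h2 : p' l = p j := by rw [hp']; simp
      have hrow : ∀ c, simpGenMatrix n l j q ⟨(k, l), hkl⟩ c = eVec k j c := by
        intro c; simp [simpGenMatrix, hki]
      simp only [Matrix.mulVec, dotProduct, hrow]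
      rw [sum_eVec k j hkj, h1, h2]
      rfl
    · by_cases hlj : l = j
      · subst hlj
        -- row (k,j), k < i
        have hkilt : k < i := by
          rw [Fin.lt_def]; have := Fin.val_ne_of_ne hki; omega
        have h1 : p' k = p k := by rw [hp']; simp [hki, ne_of_lt hkl]
        have h2 : p' l = q • p i + (1 - q) • p l := by rw [hp']; simp [hne.symm]
        have hrow : ∀ c, simpGenMatrix n i l q ⟨(k, l), hkl⟩ c =
            (q ^ 2 - q) * eVec i l c + q * eVec k i c + (1 - q) * eVec k l c := by
          intro c; simp [simpGenMatrix, hki, ne_of_gt hij']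
        simp only [Matrix.mulVec, dotProduct, hrow, add_mul, Finset.sum_add_distrib,
          mul_assoc]
        rw [← Finset.mul_sum, ← Finset.mul_sum, ← Finset.mul_sum,
          sum_eVec i l hij', sum_eVec k i hkilt, sum_eVec k l hkl]
        have h3 : p k - (q • p i + (1 - q) • p l) =
            q • (p k - p i) + (1 - q) • (p k - p l) := by module
        rw [h1, h2, h3, norm_combo]
        have h4 : (p k - p i) - (p k - p l) = -(p i - p l) := by abel
        rw [h4, norm_neg]
        rfl
      · by_cases hkj : k = j
        · subst hkj
          -- row (j,l), l > j
          have hil : i < l := lt_trans hij' hkl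
          have hlk : l ≠ k := ne_of_gt hkl
          have h1 : p' k = q • p i + (1 - q) • p k := by rw [hp']; simp [hne.symm]
          have h2 : p' l = p l := by rw [hp']; simp [hli, hlk]
          have hrow : ∀ c, simpGenMatrix n i k q ⟨(k, l), hkl⟩ c =
              (q ^ 2 - q) * eVec i k c + q * eVec i l c + (1 - q) * eVec k l c := by
            intro c; simp [simpGenMatrix, hne.symm, hli, hlk]
          simp only [Matrix.mulVec, dotProduct, hrow, add_mul, Finset.sum_add_distrib,
            mul_assoc]
          rw [← Finset.mul_sum, ← Finset.mul_sum, ← Finset.mul_sum,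
            sum_eVec i k hij', sum_eVec i l hil, sum_eVec k l hkl]
          have h3 : (q • p i + (1 - q) • p k) - p l =
              q • (p i - p l) + (1 - q) • (p k - p l) := by module
          rw [h1, h2, h3, norm_combo]
          have h4 : (p i - p l) - (p k - p l) = p i - p k := by abel
          rw [h4]
          rfl
        · -- generic row
          have h1 : p' k = p k := by rw [hp']; simp [hki, hkj]
          have h2 : p' l = p l := by rw [hp']; simp [hli, hlj]
          have hrow : ∀ c, simpGenMatrix n i j q ⟨(k, l), hkl⟩ c = eVec k l c := by
            intro c; simp [simpGenMatrix, hki, hkj, hli, hlj]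
          simp only [Matrix.mulVec, dotProduct, hrow]
          rw [sum_eVec k l hkl, h1, h2]
          rfl
end
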